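/- For V(x) = |x|² and Ω > 0, if u is a minimizer of the rotating Gross–Pitaevskii problem with potential |x - b|² for some b = (b₁, b₂) ∈ ℝ² and 0 < Ω < 2, then v(x) = u(x + 4b/(4 - Ω²))·e^{-i·(2Ω/(4-Ω²))·x·b^⊥} is a minimizer of the problem with centered potential |x|² (after adjusting by an additive constant in the energy), where b^⊥ = (-b₂, b₁). -/

import Mathlib

open MeasureTheory Real Filter Topology Bornology

noncomputable section

abbrev R2 := EuclideanSpace ℝ (Fin 2)

/-- `i`-th partial derivative of a complex-valued function on `ℝ²`. -/
def pderivC (u : R2 → ℂ) (i : Fin 2) (x : R2) : ℂ :=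
  fderiv ℝ u x (EuclideanSpace.single i 1)

/-- `|∇u|²` computed coordinatewise. -/
def gradSq (u : R2 → ℂ) (x : R2) : ℝ := ∑ i : Fin 2, ‖pderivC u i x‖ ^ 2

/-- The `i`-th component of the current `(iu, ∇u) = i(u∇ū - ū∇u)/2`. -/
def current (u : R2 → ℂ) (i : Fin 2) (x : R2) : ℝ :=
  ((Complex.I * (u x * (starRingEnd ℂ) (pderivC u i x)
      - (starRingEnd ℂ) (u x) * pderivC u i x)) / 2).re

/-- `x^⊥ · (iu, ∇u)`. -/
def xperpCurrent (u : R2 → ℂ) (x : R2) : ℝ :=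
  (-(x 1)) * current u 0 x + (x 0) * current u 1 x

/-- The Gross–Pitaevskii energy functional `F_a(u)`. -/
def GPenergy (V : R2 → ℝ) (Ω a : ℝ) (u : R2 → ℂ) : ℝ :=
  (∫ x : R2, (gradSq u x + V x * ‖u x‖ ^ 2))
    - a / 2 * (∫ x : R2, ‖u x‖ ^ 4)
    - Ω * (∫ x : R2, xperpCurrent u x)

/-- Admissible (finite-energy, unit-mass) functions for the GP problem. -/
structure Admissible (V : R2 → ℝ) (u : R2 → ℂ) : Prop where
  diff : Differentiable ℝ u
  memL2 : MemLp u 2 (volume : Measure R2)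
  int_grad : Integrable (fun x : R2 => gradSq u x) volume
  int_pot : Integrable (fun x : R2 => V x * ‖u x‖ ^ 2) volume
  int_four : Integrable (fun x : R2 => ‖u x‖ ^ 4) volume
  int_curr : Integrable (fun x : R2 => xperpCurrent u x) volume
  mass : (∫ x : R2, ‖u x‖ ^ 2) = 1

/-- `Ω` is strictly below the critical rotational speed `Ω*` of `V`. -/
def BelowCritical (V : R2 → ℝ) (Ω : ℝ) : Prop :=
  ∃ Ω' : ℝ, Ω < Ω' ∧
    Tendsto (fun x : R2 => V x - Ω' ^ 2 / 4 * ‖x‖ ^ 2) (cobounded R2) atTop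

/-- Laplacian computed as the sum of the second coordinate derivatives. -/
def lap (f : R2 → ℝ) (x : R2) : ℝ :=
  ∑ i : Fin 2,
    fderiv ℝ (fun y => fderiv ℝ f y (EuclideanSpace.single i 1)) x (EuclideanSpace.single i 1)

/-- The hypotheses characterizing the positive radial ground state `w` of
`Δw - w + w³ = 0` in `ℝ²`. -/
structure IsGroundState (w : R2 → ℝ) : Prop where
  smooth : ContDiff ℝ 2 w
  pos : ∀ x, 0 < w x
  radial : ∀ x y : R2, ‖x‖ = ‖y‖ → w x = w y
  memL2 : MemLp w 2 (volume : Measure R2)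
  grad_memL2 : MemLp (fun x => gradient w x) 2 (volume : Measure R2)
  eqn : ∀ x, lap w x - w x + (w x) ^ 3 = 0

/-! ### Auxiliary algebra lemmas -/

lemma normSq_helper (z : ℂ) : ‖z‖^2 = z.re^2 + z.im^2 := by
  rw [Complex.sq_norm, Complex.normSq_apply]; ring

lemma gradSq_aux (U P : ℂ) (r : ℝ) :
    ‖P - Complex.I * r * U‖^2 = ‖P‖^2 + r^2 * ‖U‖^2
      - 2 * r * ((Complex.I * (U * (starRingEnd ℂ) P - (starRingEnd ℂ) U * P)) / 2).re := by
  rw [normSq_helper, normSq_helper, normSq_helper]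
  simp [Complex.mul_re, Complex.mul_im, Complex.sub_re, Complex.sub_im,
    Complex.conj_re, Complex.conj_im, Complex.div_re, Complex.normSq_apply]
  ring

lemma curr_aux (U P E : ℂ) (r : ℝ) (hE : ‖E‖ = 1) :
    ((Complex.I * ((U*E) * (starRingEnd ℂ) ((P - Complex.I*r*U)*E)
      - (starRingEnd ℂ) (U*E) * ((P - Complex.I*r*U)*E))) / 2).re
    = ((Complex.I * (U * (starRingEnd ℂ) P - (starRingEnd ℂ) U * P)) / 2).re - r * ‖U‖^2 := by
  have hE2 : E * (starRingEnd ℂ) E = 1 := by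
    rw [Complex.mul_conj, Complex.normSq_eq_norm_sq, hE]; norm_num
  have hU : U * (starRingEnd ℂ) U = ((‖U‖^2 : ℝ) : ℂ) := by
    rw [Complex.mul_conj, Complex.normSq_eq_norm_sq]
  have key : (Complex.I * ((U*E) * (starRingEnd ℂ) ((P - Complex.I*r*U)*E)
      - (starRingEnd ℂ) (U*E) * ((P - Complex.I*r*U)*E))) / 2
      = (Complex.I * (U * (starRingEnd ℂ) P - (starRingEnd ℂ) U * P)) / 2
        - ((r * ‖U‖^2 : ℝ) : ℂ) := by
    simp only [map_mul, map_sub, Complex.conj_I, Complex.conj_ofReal]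
    push_cast
    push_cast at hU
    linear_combination (Complex.I * (U * ((starRingEnd ℂ) P + Complex.I*r*(starRingEnd ℂ) U)
        - (starRingEnd ℂ) U * (P - Complex.I*r*U)) / 2) * hE2 - (r : ℂ) * hU
      + ((r : ℂ) * U * (starRingEnd ℂ) U) * Complex.I_sq
  rw [key, Complex.sub_re, Complex.ofReal_re]

/-! ### The gauge transform and its derivative -/

def phase (d : R2) (x : R2) : ℂ := ((x 0 * d 0 + x 1 * d 1 : ℝ) : ℂ)

def phaseL (d : R2) : R2 →L[ℝ] ℂ :=
  Complex.ofRealCLM.comp ((innerSL ℝ) d)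

lemma phase_eq (d x : R2) : phase d x = ((inner ℝ d x : ℝ) : ℂ) := by
  simp [phase, PiLp.inner_apply, Fin.sum_univ_two, RCLike.inner_apply]

lemma hasFDerivAt_phase (d x : R2) : HasFDerivAt (phase d) (phaseL d) x := by
  have : (phase d) = fun x => phaseL d x := by
    funext y; simp [phase_eq, phaseL]
  rw [this]; exact (phaseL d).hasFDerivAt

lemma phaseL_single (d : R2) (i : Fin 2) : phaseL d (EuclideanSpace.single i 1) = (d i : ℂ) := by
  fin_cases i <;> simp [phaseL, EuclideanSpace.inner_single_right]

def gaugeT (c d : R2) (u : R2 → ℂ) (x : R2) : ℂ :=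
  u (x + c) * Complex.exp (-Complex.I * phase d x)

lemma norm_exp_phase (d : R2) (x : R2) : ‖Complex.exp (-Complex.I * phase d x)‖ = 1 := by
  rw [Complex.norm_exp]
  simp [phase]

lemma norm_gaugeT (c d : R2) (u : R2 → ℂ) (x : R2) : ‖gaugeT c d u x‖ = ‖u (x + c)‖ := by
  rw [gaugeT, norm_mul, norm_exp_phase, mul_one]

lemma hasFDerivAt_gaugeT (c d : R2) {u : R2 → ℂ} (hu : Differentiable ℝ u) (x : R2) :
    HasFDerivAt (gaugeT c d u)
      (u (x + c) • (Complex.exp (-Complex.I * phase d x) • ((-Complex.I) • phaseL d))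
        + Complex.exp (-Complex.I * phase d x) • ((fderiv ℝ u (x + c)).comp
            (ContinuousLinearMap.id ℝ R2))) x := by
  have hA : HasFDerivAt (fun x : R2 => u (x + c))
      ((fderiv ℝ u (x + c)).comp (ContinuousLinearMap.id ℝ R2)) x := by
    have ht : HasFDerivAt (fun x : R2 => x + c) (ContinuousLinearMap.id ℝ R2) x :=
      (hasFDerivAt_id x).add_const c
    exact ((hu (x + c)).hasFDerivAt).comp x ht
  have hB : HasFDerivAt (fun x : R2 => Complex.exp (-Complex.I * phase d x))
      (Complex.exp (-Complex.I * phase d x) • ((-Complex.I) • phaseL d)) x := by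
    have hp : HasFDerivAt (fun x : R2 => -Complex.I * phase d x) ((-Complex.I) • phaseL d) x :=
      (hasFDerivAt_phase d x).const_mul (-Complex.I)
    exact hp.cexp
  exact hA.mul hB

lemma diff_gaugeT (c d : R2) {u : R2 → ℂ} (hu : Differentiable ℝ u) :
    Differentiable ℝ (gaugeT c d u) :=
  fun x => (hasFDerivAt_gaugeT c d hu x).differentiableAt

lemma pderivC_gaugeT (c d : R2) {u : R2 → ℂ} (hu : Differentiable ℝ u) (i : Fin 2) (x : R2) :
    pderivC (gaugeT c d u) i x =
      (pderivC u i (x + c) - Complex.I * (d i : ℂ) * u (x + c))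
        * Complex.exp (-Complex.I * phase d x) := by
  rw [pderivC, (hasFDerivAt_gaugeT c d hu x).fderiv]
  simp [pderivC, phaseL_single, smul_eq_mul]
  ring

/-! ### Pointwise identities for the transformed quantities -/

lemma current_gaugeT (c d : R2) {u : R2 → ℂ} (hu : Differentiable ℝ u) (i : Fin 2) (x : R2) :
    current (gaugeT c d u) i x = current u i (x + c) - d i * ‖u (x + c)‖^2 := by
  rw [current, pderivC_gaugeT c d hu i x, gaugeT]
  exact curr_aux (u (x + c)) (pderivC u i (x + c)) _ (d i) (norm_exp_phase d x)

lemma gradSq_gaugeT (c d : R2) {u : R2 → ℂ} (hu : Differentiable ℝ u) (x : R2) :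
    gradSq (gaugeT c d u) x = gradSq u (x + c) + (d 0^2 + d 1^2) * ‖u (x + c)‖^2
      - 2 * (d 0 * current u 0 (x + c) + d 1 * current u 1 (x + c)) := by
  rw [gradSq, gradSq, Fin.sum_univ_two, Fin.sum_univ_two,
    pderivC_gaugeT c d hu 0 x, pderivC_gaugeT c d hu 1 x, norm_mul, norm_mul,
    norm_exp_phase, mul_one, mul_one, gradSq_aux, gradSq_aux]
  rw [current, current]
  ring

/-! ### Integrability lemmas -/

lemma meas_pderivC (u : R2 → ℂ) (i : Fin 2) : Measurable (pderivC u i) := by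
  unfold pderivC
  exact measurable_fderiv_apply_const (𝕜 := ℝ) (f := u) (EuclideanSpace.single i 1)

lemma meas_current {u : R2 → ℂ} (hu : Differentiable ℝ u) (i : Fin 2) :
    Measurable (current u i) := by
  have h1 : Measurable u := hu.continuous.measurable
  have h2 : Measurable (pderivC u i) := meas_pderivC u i
  unfold current
  fun_prop

lemma int_sq_of_memL2 {u : R2 → ℂ} (h : MemLp u 2 (volume : Measure R2)) :
    Integrable (fun x => ‖u x‖^2) volume := by
  have := h.integrable_norm_rpow (by norm_num) (by norm_num)
  simpa [ENNReal.toReal_ofNat, Real.rpow_natCast] using this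

lemma sq_pderiv_le_gradSq (u : R2 → ℂ) (i : Fin 2) (x : R2) :
    ‖pderivC u i x‖^2 ≤ gradSq u x := by
  rw [gradSq]
  exact Finset.single_le_sum (f := fun j => ‖pderivC u j x‖^2)
    (fun j _ => sq_nonneg _) (Finset.mem_univ i)

lemma abs_current_le (u : R2 → ℂ) (i : Fin 2) (x : R2) :
    |current u i x| ≤ (‖u x‖^2 + ‖pderivC u i x‖^2)/2 := by
  have h1 : |current u i x| ≤ ‖(Complex.I * (u x * (starRingEnd ℂ) (pderivC u i x)
      - (starRingEnd ℂ) (u x) * pderivC u i x)) / 2‖ := Complex.abs_re_le_norm _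
  refine h1.trans ?_
  rw [norm_div, norm_mul]
  simp only [Complex.norm_I, one_mul]
  have h3 : ‖u x * (starRingEnd ℂ) (pderivC u i x) - (starRingEnd ℂ) (u x) * pderivC u i x‖
      ≤ ‖u x‖ * ‖pderivC u i x‖ + ‖u x‖ * ‖pderivC u i x‖ := by
    refine (norm_sub_le _ _).trans ?_
    simp [norm_mul]
  have h2 : ‖u x‖ * ‖pderivC u i x‖ ≤ (‖u x‖^2 + ‖pderivC u i x‖^2)/2 := by
    nlinarith [sq_nonneg (‖u x‖ - ‖pderivC u i x‖)]
  have h4 : ‖(2:ℂ)‖ = 2 := by norm_num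
  rw [h4]
  nlinarith

lemma int_current {V : R2 → ℝ} {u : R2 → ℂ} (hu : Admissible V u) (i : Fin 2) :
    Integrable (current u i) volume := by
  have hN := int_sq_of_memL2 hu.memL2
  have hb : Integrable (fun x => (‖u x‖^2 + gradSq u x)/2) volume :=
    (hN.add hu.int_grad).div_const 2
  refine hb.mono ((meas_current hu.diff i).aestronglyMeasurable) (ae_of_all _ fun x => ?_)
  rw [Real.norm_eq_abs, Real.norm_eq_abs]
  have h1 := abs_current_le u i x
  have h2 := sq_pderiv_le_gradSq u i x
  have hg : (0:ℝ) ≤ gradSq u x := Finset.sum_nonneg fun j _ => sq_nonneg _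
  have h3 : (0:ℝ) ≤ (‖u x‖^2 + gradSq u x)/2 := by positivity
  rw [abs_of_nonneg h3]
  nlinarith

lemma abs_coord_le_norm (x : R2) (i : Fin 2) : |x i| ≤ ‖x‖ := by
  have h := abs_real_inner_le_norm (EuclideanSpace.single i (1:ℝ)) x
  rw [EuclideanSpace.norm_single] at h
  simpa [EuclideanSpace.inner_single_left] using h

lemma int_coord_mul_sq {u : R2 → ℂ} (hc : Continuous u)
    (hN : Integrable (fun x : R2 => ‖u x‖^2) volume)
    (hquad : Integrable (fun x : R2 => ‖x‖^2 * ‖u x‖^2) volume) (i : Fin 2) :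
    Integrable (fun x : R2 => x i * ‖u x‖^2) volume := by
  have hb : Integrable (fun x : R2 => ‖u x‖^2 + ‖x‖^2 * ‖u x‖^2) volume := hN.add hquad
  refine hb.mono ?_ (ae_of_all _ fun x => ?_)
  · exact (((continuous_apply i).comp (PiLp.continuous_ofLp 2 (fun _ : Fin 2 => ℝ))).mul
      ((hc.norm.pow 2))).aestronglyMeasurable
  · rw [Real.norm_eq_abs, Real.norm_eq_abs, abs_mul, abs_of_nonneg (sq_nonneg ‖u x‖)]
    have h1 := abs_coord_le_norm x i
    have h2 : (0:ℝ) ≤ ‖u x‖^2 := sq_nonneg _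
    have h3 : ‖x‖ ≤ 1 + ‖x‖^2 := by nlinarith [sq_nonneg (‖x‖ - 1), norm_nonneg x]
    have h4 : |x i| * ‖u x‖^2 ≤ (1 + ‖x‖^2) * ‖u x‖^2 := by
      apply mul_le_mul_of_nonneg_right _ h2
      exact h1.trans h3
    rw [abs_of_nonneg (by positivity : (0:ℝ) ≤ ‖u x‖^2 + ‖x‖^2 * ‖u x‖^2)]
    nlinarith

lemma int_quad_of_shift {u : R2 → ℂ} (hc : Continuous u) (p : R2)
    (hN : Integrable (fun x : R2 => ‖u x‖^2) volume)
    (hp : Integrable (fun x : R2 => ‖x - p‖^2 * ‖u x‖^2) volume) :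
    Integrable (fun x : R2 => ‖x‖^2 * ‖u x‖^2) volume := by
  have hb : Integrable (fun x : R2 => 2*(‖x - p‖^2 * ‖u x‖^2) + (2*‖p‖^2) * ‖u x‖^2) volume :=
    (hp.const_mul 2).add (hN.const_mul _)
  refine hb.mono ((continuous_norm.pow 2).mul (hc.norm.pow 2)).aestronglyMeasurable
    (ae_of_all _ fun x => ?_)
  rw [Real.norm_eq_abs, Real.norm_eq_abs,
    abs_of_nonneg (by positivity : (0:ℝ) ≤ ‖x‖^2 * ‖u x‖^2)]
  have h1 : ‖x‖ ≤ ‖x - p‖ + ‖p‖ := by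
    simpa using norm_add_le (x - p) p
  have h2 : ‖x‖^2 ≤ 2*‖x - p‖^2 + 2*‖p‖^2 := by
    nlinarith [sq_nonneg (‖x - p‖ - ‖p‖), norm_nonneg x, norm_nonneg (x - p), norm_nonneg p]
  have h3 : (0:ℝ) ≤ ‖u x‖^2 := sq_nonneg _
  have := mul_le_mul_of_nonneg_right h2 h3
  rw [abs_of_nonneg (by positivity : (0:ℝ) ≤ 2*(‖x - p‖^2 * ‖u x‖^2) + (2*‖p‖^2) * ‖u x‖^2)]
  nlinarith

lemma int_shift_of_quad {u : R2 → ℂ} (hc : Continuous u) (q : R2)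
    (hN : Integrable (fun x : R2 => ‖u x‖^2) volume)
    (hquad : Integrable (fun x : R2 => ‖x‖^2 * ‖u x‖^2) volume) :
    Integrable (fun x : R2 => ‖x - q‖^2 * ‖u x‖^2) volume := by
  have hb : Integrable (fun x : R2 => 2*(‖x‖^2 * ‖u x‖^2) + (2*‖q‖^2) * ‖u x‖^2) volume :=
    (hquad.const_mul 2).add (hN.const_mul _)
  refine hb.mono (((continuous_id.sub continuous_const).norm.pow 2).mul
    (hc.norm.pow 2)).aestronglyMeasurable (ae_of_all _ fun x => ?_)
  rw [Real.norm_eq_abs, Real.norm_eq_abs,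
    abs_of_nonneg (by positivity : (0:ℝ) ≤ ‖x - q‖^2 * ‖u x‖^2)]
  have h2 : ‖x - q‖^2 ≤ 2*‖x‖^2 + 2*‖q‖^2 := by
    have h1 : ‖x - q‖ ≤ ‖x‖ + ‖q‖ := norm_sub_le x q
    nlinarith [norm_nonneg (x - q), norm_nonneg x, norm_nonneg q, sq_nonneg (‖x‖ - ‖q‖),
      mul_le_mul h1 h1 (norm_nonneg _) (by positivity : (0:ℝ) ≤ ‖x‖ + ‖q‖)]
  have h3 : (0:ℝ) ≤ ‖u x‖^2 := sq_nonneg _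
  have := mul_le_mul_of_nonneg_right h2 h3
  rw [abs_of_nonneg (by positivity : (0:ℝ) ≤ 2*(‖x‖^2 * ‖u x‖^2) + (2*‖q‖^2) * ‖u x‖^2)]
  nlinarith

lemma integrable_shift {f : R2 → ℝ} (hf : Integrable f volume) (c : R2) :
    Integrable (fun x => f (x + c)) volume :=
  ((measurePreserving_add_right volume c).integrable_comp hf.1).2 hf

/-! ### Master gauge-transformation lemma -/

lemma gauge_master (V₁ V₂ : R2 → ℝ) (Ω a C : ℝ) (c d : R2) {u : R2 → ℂ}
    (hu : Admissible V₁ u)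
    (hpot : Integrable (fun y : R2 => V₂ (y - c) * ‖u y‖^2) volume)
    (hquad : Integrable (fun y : R2 => ‖y‖^2 * ‖u y‖^2) volume)
    (hd0 : 2 * d 0 = -(Ω * c 1)) (hd1 : 2 * d 1 = Ω * c 0)
    (hC : ∀ y : R2, V₂ (y - c) - V₁ y + (d 0^2 + d 1^2)
        - Ω * ((y 1 - c 1) * d 0 - (y 0 - c 0) * d 1) = C) :
    Admissible V₂ (gaugeT c d u)
      ∧ GPenergy V₂ Ω a (gaugeT c d u) = GPenergy V₁ Ω a u + C := by
  have hdiff := hu.diff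
  have hN : Integrable (fun y : R2 => ‖u y‖^2) volume := int_sq_of_memL2 hu.memL2
  have hcur : ∀ i, Integrable (current u i) volume := int_current hu
  have hcoord : ∀ i, Integrable (fun y : R2 => y i * ‖u y‖^2) volume :=
    int_coord_mul_sq hdiff.continuous hN hquad
  set v := gaugeT c d u with hvdef
  -- the two correction integrands
  set D1 : R2 → ℝ := fun y => (d 0^2 + d 1^2) * ‖u y‖^2
      - 2 * (d 0 * current u 0 y + d 1 * current u 1 y)
      + (V₂ (y - c) - V₁ y) * ‖u y‖^2 with hD1def
  set D3 : R2 → ℝ := fun y => c 1 * current u 0 y - c 0 * current u 1 y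
      + ((y 1 - c 1) * d 0 - (y 0 - c 0) * d 1) * ‖u y‖^2 with hD3def
  have ID1 : Integrable D1 volume := by
    refine Integrable.add (Integrable.sub (hN.const_mul _) ?_) ?_
    · exact (((hcur 0).const_mul (d 0)).add ((hcur 1).const_mul (d 1))).const_mul 2
    · have : (fun y : R2 => (V₂ (y - c) - V₁ y) * ‖u y‖^2)
          = fun y : R2 => V₂ (y - c) * ‖u y‖^2 - V₁ y * ‖u y‖^2 := by
        funext y; ring
      rw [this]; exact hpot.sub hu.int_pot
  have ID3 : Integrable D3 volume := by
    have h1 : (fun y : R2 => ((y 1 - c 1) * d 0 - (y 0 - c 0) * d 1) * ‖u y‖^2)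
        = fun y : R2 => d 0 * (y 1 * ‖u y‖^2) - d 1 * (y 0 * ‖u y‖^2)
            + (c 0 * d 1 - c 1 * d 0) * ‖u y‖^2 := by
      funext y; ring
    refine Integrable.add (Integrable.sub ((hcur 0).const_mul _) ((hcur 1).const_mul _)) ?_
    rw [h1]
    exact (((hcoord 1).const_mul _).sub ((hcoord 0).const_mul _)).add (hN.const_mul _)
  -- pointwise identity for the first integrand
  have hpt1 : (fun x : R2 => gradSq v x + V₂ x * ‖v x‖^2)
      = fun x : R2 => ((fun y => (gradSq u y + V₁ y * ‖u y‖^2) + D1 y) (x + c)) := by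
    funext x
    have hx : V₂ ((x + c) - c) = V₂ x := by rw [add_sub_cancel_right]
    simp only [hD1def]
    rw [gradSq_gaugeT c d hdiff x, norm_gaugeT c d u x, hx]
    ring
  -- pointwise identity for the current integrand
  have hpt3 : (fun x : R2 => xperpCurrent v x)
      = fun x : R2 => ((fun y => xperpCurrent u y + D3 y) (x + c)) := by
    funext x
    have hx0 : (x + c) 0 = x 0 + c 0 := rfl
    have hx1 : (x + c) 1 = x 1 + c 1 := rfl
    simp only [hD3def, xperpCurrent]
    rw [current_gaugeT c d hdiff 0 x, current_gaugeT c d hdiff 1 x, hx0, hx1]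
    ring
  -- pointwise identity for the quartic term
  have hpt4 : (fun x : R2 => ‖v x‖^4) = fun x : R2 => ((fun y => ‖u y‖^4) (x + c)) := by
    funext x
    rw [norm_gaugeT c d u x]
  -- pointwise identity for mass
  have hpt2 : (fun x : R2 => ‖v x‖^2) = fun x : R2 => ((fun y => ‖u y‖^2) (x + c)) := by
    funext x
    rw [norm_gaugeT c d u x]
  have hbase1 : Integrable (fun y : R2 => (gradSq u y + V₁ y * ‖u y‖^2) + D1 y) volume :=
    (hu.int_grad.add hu.int_pot).add ID1
  have hbase3 : Integrable (fun y : R2 => xperpCurrent u y + D3 y) volume :=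
    hu.int_curr.add ID3
  have hadm : Admissible V₂ v := by
    constructor
    · exact diff_gaugeT c d hdiff
    · have h1 : MemLp (u ∘ (fun x : R2 => x + c)) 2 (volume : Measure R2) :=
        hu.memL2.comp_measurePreserving (measurePreserving_add_right volume c)
      refine MemLp.of_le h1 ((diff_gaugeT c d hdiff).continuous.aestronglyMeasurable)
        (ae_of_all _ fun x => ?_)
      rw [norm_gaugeT c d u x]
      rfl
    · have h1 : (fun x : R2 => gradSq v x)
          = fun x : R2 => ((fun y => gradSq u y + D1 y
              - (V₂ (y - c) - V₁ y) * ‖u y‖^2) (x + c)) := by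
        funext x
        simp only [hD1def]
        rw [gradSq_gaugeT c d hdiff x]
        ring
      have hIg : Integrable (fun y : R2 => gradSq u y + D1 y
          - (V₂ (y - c) - V₁ y) * ‖u y‖ ^ 2) volume := by
        refine (hu.int_grad.add ID1).sub ?_
        have : (fun y : R2 => (V₂ (y - c) - V₁ y) * ‖u y‖^2)
            = fun y : R2 => V₂ (y - c) * ‖u y‖^2 - V₁ y * ‖u y‖^2 := by
          funext y; ring
        rw [this]; exact hpot.sub hu.int_pot
      rw [h1]
      exact integrable_shift hIg c
    · have h1 : (fun x : R2 => V₂ x * ‖v x‖^2)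
          = fun x : R2 => ((fun y => V₂ (y - c) * ‖u y‖^2) (x + c)) := by
        funext x
        have hx : V₂ ((x + c) - c) = V₂ x := by rw [add_sub_cancel_right]
        rw [norm_gaugeT c d u x]
        simp only
        rw [hx]
      rw [h1]
      exact integrable_shift hpot c
    · rw [hpt4]
      exact integrable_shift hu.int_four c
    · rw [hpt3]
      exact integrable_shift hbase3 c
    · rw [hpt2, integral_add_right_eq_self (fun y : R2 => ‖u y‖^2) c]
      exact hu.mass
  refine ⟨hadm, ?_⟩
  -- energy computation
  have hS1 : (∫ x : R2, (gradSq v x + V₂ x * ‖v x‖^2))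
      = (∫ x : R2, (gradSq u x + V₁ x * ‖u x‖^2)) + ∫ x : R2, D1 x := by
    rw [hpt1, integral_add_right_eq_self (fun y : R2 => (gradSq u y + V₁ y * ‖u y‖^2) + D1 y) c]
    exact integral_add (hu.int_grad.add hu.int_pot) ID1
  have hS3 : (∫ x : R2, xperpCurrent v x)
      = (∫ x : R2, xperpCurrent u x) + ∫ x : R2, D3 x := by
    rw [hpt3, integral_add_right_eq_self (fun y : R2 => xperpCurrent u y + D3 y) c]
    exact integral_add hu.int_curr ID3
  have hS4 : (∫ x : R2, ‖v x‖^4) = ∫ x : R2, ‖u x‖^4 := by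
    rw [hpt4, integral_add_right_eq_self (fun y : R2 => ‖u y‖^4) c]
  have hD : (∫ x : R2, D1 x) = Ω * (∫ x : R2, D3 x) + C := by
    have hpt : D1 = fun y => Ω * D3 y + C * ‖u y‖^2 := by
      funext y
      have := hC y
      simp only [hD1def, hD3def]
      linear_combination ‖u y‖^2 * hC y - current u 0 y * hd0 - current u 1 y * hd1
    rw [hpt, integral_add (ID3.const_mul Ω) (hN.const_mul C), integral_const_mul,
      integral_const_mul, hu.mass, mul_one]
  rw [GPenergy, GPenergy, hS1, hS3, hS4, hD]
  ring

lemma r2_norm_sq (z : R2) : ‖z‖^2 = z 0^2 + z 1^2 := by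
  rw [EuclideanSpace.norm_eq, Real.sq_sqrt (by positivity)]
  simp [Fin.sum_univ_two, Real.norm_eq_abs, sq_abs]

/-- if `u` minimizes the rotating GP problem with shifted harmonic trap
`|x - b|²` and `0 < Ω < 2`, then the gauge-translated function
`v(x) = u(x + 4b/(4-Ω²)) e^{-i(2Ω/(4-Ω²)) x·b^⊥}` minimizes the problem with the
centered trap `|x|²`. -/
theorem gauge_translation_of_minimizer
    (Ω a : ℝ) (hΩ : 0 < Ω) (hΩ2 : Ω < 2)
    (b : R2) (w : R2 → ℝ) (hw : IsGroundState w)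
    (u : R2 → ℂ)
    (hadm : Admissible (fun x : R2 => ‖x - b‖ ^ 2) u)
    (hmin : ∀ u' : R2 → ℂ, Admissible (fun x : R2 => ‖x - b‖ ^ 2) u' →
      GPenergy (fun x : R2 => ‖x - b‖ ^ 2) Ω a u
        ≤ GPenergy (fun x : R2 => ‖x - b‖ ^ 2) Ω a u')
    (v : R2 → ℂ)
    (hv : v = fun x : R2 =>
      u (x + (4 / (4 - Ω ^ 2)) • b)
        * Complex.exp (-Complex.I *
            (((2 * Ω / (4 - Ω ^ 2)) * (x 0 * (-(b 1)) + x 1 * (b 0)) : ℝ) : ℂ))) :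
    Admissible (fun x : R2 => ‖x‖ ^ 2) v
    ∧ ∀ u' : R2 → ℂ, Admissible (fun x : R2 => ‖x‖ ^ 2) u' →
        GPenergy (fun x : R2 => ‖x‖ ^ 2) Ω a v
          ≤ GPenergy (fun x : R2 => ‖x‖ ^ 2) Ω a u' := by
  have hΩ4 : Ω^2 < 4 := by nlinarith
  have h4 : (4:ℝ) - Ω^2 ≠ 0 := by nlinarith
  set k : ℝ := 2 * Ω / (4 - Ω ^ 2) with hk
  set c : R2 := (4 / (4 - Ω ^ 2)) • b with hcdef
  set d : R2 := EuclideanSpace.single 0 (k * (-(b 1))) + EuclideanSpace.single 1 (k * (b 0))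
    with hddef
  set C : ℝ := Ω^2 / (4 - Ω^2) * ‖b‖^2 with hCdef
  have hd0v : d 0 = k * (-(b 1)) := by
    simp [hddef, PiLp.add_apply, EuclideanSpace.single_apply]
  have hd1v : d 1 = k * (b 0) := by
    simp [hddef, PiLp.add_apply, EuclideanSpace.single_apply]
  have hc0 : c 0 = (4 / (4 - Ω^2)) * b 0 := by simp [hcdef]
  have hc1 : c 1 = (4 / (4 - Ω^2)) * b 1 := by simp [hcdef]
  have hveq : v = gaugeT c d u := by
    rw [hv]
    funext x
    unfold gaugeT phase
    congr 3
    rw [hd0v, hd1v]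
    ring
  have hN := int_sq_of_memL2 hadm.memL2
  have hquad1 : Integrable (fun y : R2 => ‖y‖^2 * ‖u y‖^2) volume :=
    int_quad_of_shift hadm.diff.continuous b hN hadm.int_pot
  have hpot1 : Integrable (fun y : R2 => ‖y - c‖^2 * ‖u y‖^2) volume :=
    int_shift_of_quad hadm.diff.continuous c hN hquad1
  have hd0 : 2 * d 0 = -(Ω * c 1) := by
    rw [hd0v, hc1, hk]; field_simp; first | exact Or.inl (by ring) | ring
  have hd1 : 2 * d 1 = Ω * c 0 := by
    rw [hd1v, hc0, hk]; field_simp; first | exact Or.inl (by ring) | ring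
  have hC1 : ∀ y : R2, ‖y - c‖^2 - ‖y - b‖^2 + (d 0^2 + d 1^2)
      - Ω * ((y 1 - c 1) * d 0 - (y 0 - c 0) * d 1) = C := by
    intro y
    rw [r2_norm_sq (y - c), r2_norm_sq (y - b), hd0v, hd1v, hCdef, r2_norm_sq b, hk]
    simp only [PiLp.sub_apply, hc0, hc1]
    field_simp
    ring
  have key1 := gauge_master (fun x : R2 => ‖x - b‖^2) (fun x : R2 => ‖x‖^2) Ω a C c d
    hadm hpot1 hquad1 hd0 hd1 hC1
  rw [← hveq] at key1
  refine ⟨key1.1, fun u' hu' => ?_⟩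
  -- reverse transform
  have hN' := int_sq_of_memL2 hu'.memL2
  have hquad2 : Integrable (fun y : R2 => ‖y‖^2 * ‖u' y‖^2) volume := hu'.int_pot
  have hpot2 : Integrable (fun y : R2 => ‖(y - -c) - b‖^2 * ‖u' y‖^2) volume := by
    have h := int_shift_of_quad hu'.diff.continuous (b - c) hN' hquad2
    simpa only [show ∀ y : R2, y - -c - b = y - (b - c) from fun y => by abel] using h
  have hd0' : 2 * (-d) 0 = -(Ω * (-c) 1) := by
    simp only [PiLp.neg_apply]
    linarith [hd0]
  have hd1' : 2 * (-d) 1 = Ω * (-c) 0 := by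
    simp only [PiLp.neg_apply]
    linarith [hd1]
  have hC2 : ∀ y : R2, ‖(y - -c) - b‖^2 - ‖y‖^2 + ((-d) 0^2 + (-d) 1^2)
      - Ω * ((y 1 - (-c) 1) * (-d) 0 - (y 0 - (-c) 0) * (-d) 1) = -C := by
    intro y
    rw [r2_norm_sq (y - -c - b), r2_norm_sq y, hCdef, r2_norm_sq b]
    simp only [PiLp.sub_apply, PiLp.neg_apply, hc0, hc1, hd0v, hd1v, hk]
    field_simp
    ring
  have key2 := gauge_master (fun x : R2 => ‖x‖^2) (fun x : R2 => ‖x - b‖^2) Ω a (-C) (-c) (-d)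
    hu' hpot2 hquad2 hd0' hd1' hC2
  have hmin2 := hmin _ key2.1
  have h1 : GPenergy (fun x : R2 => ‖x‖ ^ 2) Ω a v
      = GPenergy (fun x : R2 => ‖x - b‖ ^ 2) Ω a u + C := key1.2
  have h2 : GPenergy (fun x : R2 => ‖x - b‖ ^ 2) Ω a (gaugeT (-c) (-d) u')
      = GPenergy (fun x : R2 => ‖x‖ ^ 2) Ω a u' + -C := key2.2
  linarith
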